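/- Let 0 < λ < 1 and let r be the (unique) fixed point of ζ_λ in (−1, 0). For every x ∈ (r, 0), all iterates ζ_λ^n(x) remain in (r, 0), the sequence (ζ_λ^n(x))_{n≥0} is strictly increasing, and ζ_λ^n(x) → 0 as n → ∞. -/

import Mathlib

open Filter

/-- The real function `ζ_λ(x) = λ·x·e^{−x}/(x+1)`. -/
noncomputable def zeta (lam x : ℝ) : ℝ := lam * x * Real.exp (-x) / (x + 1)

lemma aux_strictMono (lam : ℝ) (hlam0 : 0 < lam) :
    StrictMono (fun x : ℝ => x + 1 - lam * Real.exp (-x)) := by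
  have h1 : StrictAnti (fun x : ℝ => lam * Real.exp (-x)) := by
    have h0 : StrictAnti (fun x : ℝ => Real.exp (-x)) :=
      Real.exp_strictMono.comp_strictAnti (fun a b h => by simpa using neg_lt_neg h)
    exact h0.const_mul hlam0
  intro a b hab
  have := h1 hab
  simp only at this ⊢
  linarith

lemma fix_eq (lam r : ℝ) (hr : r ∈ Set.Ioo (-1 : ℝ) 0) (hfix : zeta lam r = r) :
    lam * Real.exp (-r) = r + 1 := by
  obtain ⟨hr1, hr0⟩ := hr
  have hne : r ≠ 0 := ne_of_lt hr0
  have hden : r + 1 ≠ 0 := by linarith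
  have : lam * r * Real.exp (-r) = r * (r + 1) := by
    unfold zeta at hfix
    field_simp [hden] at hfix
    rw [mul_comm lam r, mul_assoc, hfix]
  have h2 : r * (lam * Real.exp (-r)) = r * (r + 1) := by ring_nf; ring_nf at this; linarith
  exact mul_left_cancel₀ hne h2

lemma step (lam : ℝ) (hlam0 : 0 < lam)
    (r : ℝ) (hr : r ∈ Set.Ioo (-1 : ℝ) 0) (hfix : zeta lam r = r)
    (y : ℝ) (hy : y ∈ Set.Ioo r 0) : zeta lam y ∈ Set.Ioo y 0 := by
  obtain ⟨hr1, hr0⟩ := hr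
  obtain ⟨hyr, hy0⟩ := hy
  have hden : (0:ℝ) < y + 1 := by linarith
  have hexp : 0 < Real.exp (-y) := Real.exp_pos _
  have hkey : lam * Real.exp (-y) < y + 1 := by
    have := aux_strictMono lam hlam0 hyr
    have hfe := fix_eq lam r ⟨hr1, hr0⟩ hfix
    simp only at this
    linarith
  constructor
  · rw [zeta, lt_div_iff₀ hden]
    nlinarith
  · rw [zeta]
    apply div_neg_of_neg_of_pos _ hden
    nlinarith [mul_neg_of_neg_of_pos hy0 (mul_pos hlam0 hexp)]

theorem iterates_increase_to_zero_on_Ioo_r_zero (lam : ℝ) (hlam0 : 0 < lam) (hlam1 : lam < 1)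
    (r : ℝ) (hr : r ∈ Set.Ioo (-1 : ℝ) 0) (hfix : zeta lam r = r)
    (x : ℝ) (hx : x ∈ Set.Ioo r 0) :
    (∀ n : ℕ, (zeta lam)^[n] x ∈ Set.Ioo r 0) ∧
      StrictMono (fun n : ℕ => (zeta lam)^[n] x) ∧
      Tendsto (fun n : ℕ => (zeta lam)^[n] x) atTop (nhds 0) := by
  set a : ℕ → ℝ := fun n => (zeta lam)^[n] x with ha
  have hmem : ∀ n, a n ∈ Set.Ioo r 0 := by
    intro n
    induction n with
    | zero => simpa [ha] using hx
    | succ n ih =>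
      have hs := step lam hlam0 r hr hfix (a n) ih
      have : a (n+1) = zeta lam (a n) := by
        simp [ha, Function.iterate_succ_apply']
      rw [this]
      exact ⟨lt_trans ih.1 hs.1, hs.2⟩
  have hlt : ∀ n, a n < a (n+1) := by
    intro n
    have hs := step lam hlam0 r hr hfix (a n) (hmem n)
    have : a (n+1) = zeta lam (a n) := by
      simp [ha, Function.iterate_succ_apply']
    rw [this]; exact hs.1
  have hmono : StrictMono a := strictMono_nat_of_lt_succ hlt
  refine ⟨hmem, hmono, ?_⟩
  -- convergence
  have hbdd : BddAbove (Set.range a) := by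
    refine ⟨0, ?_⟩
    rintro _ ⟨n, rfl⟩
    exact le_of_lt (hmem n).2
  have htend : Tendsto a atTop (nhds (⨆ n, a n)) :=
    tendsto_atTop_ciSup hmono.monotone hbdd
  set L := ⨆ n, a n with hL
  have hLle : L ≤ 0 := ciSup_le fun n => le_of_lt (hmem n).2
  have hLge : r < L := lt_of_lt_of_le (hmem 0).1 (le_ciSup hbdd 0)
  have hLne : L + 1 ≠ 0 := by
    have : (-1:ℝ) < r := hr.1
    intro h; linarith
  -- ζ is continuous at L
  have hcont : ContinuousAt (zeta lam) L := by
    apply ContinuousAt.div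
    · exact (continuousAt_const.mul continuousAt_id).mul
        (Real.continuous_exp.continuousAt.comp continuousAt_neg)
    · exact continuousAt_id.add continuousAt_const
    · exact hLne
  have htend2 : Tendsto (fun n => zeta lam (a n)) atTop (nhds (zeta lam L)) :=
    hcont.tendsto.comp htend
  have htend3 : Tendsto (fun n => a (n+1)) atTop (nhds L) :=
    htend.comp (tendsto_add_atTop_nat 1)
  have heq : ∀ n, a (n+1) = zeta lam (a n) := by
    intro n; simp [ha, Function.iterate_succ_apply']
  have hfixL : zeta lam L = L := by
    have : Tendsto (fun n => zeta lam (a n)) atTop (nhds L) := by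
      simpa [heq] using htend3
    exact tendsto_nhds_unique htend2 this
  -- L must be 0
  have hL0 : L = 0 := by
    by_contra hne
    have hL0' : L < 0 := lt_of_le_of_ne hLle hne
    have hfe : lam * Real.exp (-L) = L + 1 :=
      fix_eq lam L ⟨by linarith [hr.1], hL0'⟩ hfixL
    have := aux_strictMono lam hlam0 hLge
    simp only at this
    have hfr := fix_eq lam r hr hfix
    linarith
  rw [hL0] at htend
  exact htend
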